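/- Let x₀ ∈ (0,∞], and let F : [0,x₀) → ℝ be a C² function with F(0) = F'(0) = 0, F'' ≥ 0 on [0,x₀), and F'(M₁) > 0 for some M₁ ∈ (0,x₀). Define v(x) = ∫₀^x 2τ √(1 + F'(τ)²) dτ and C(x) = (2v(x) - 2x²)/v(x)² for x > 0, and assume v(x) → ∞ as x → x₀. Then for every integer n ≥ 2, ∫_{M₁}^x C(τ)ⁿ · n v(τ)^{n-1} v'(τ) dτ → ∞ as x → x₀. -/

import Mathlib

open MeasureTheory Filter Set

set_option maxHeartbeats 1000000 in
/-- Let `x₀ ∈ (0,∞]`, `F` a `C²` function on `[0,x₀)` with `F(0) = F'(0) = 0`, `F'' ≥ 0`,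
`F'(M₁) > 0` for some `M₁ ∈ (0,x₀)`, and set `v(x) = ∫₀^x 2τ√(1+F'(τ)²) dτ` and
`C(x) = (2v(x) - 2x²)/v(x)²`; assume `v(x) → ∞` as `x → x₀⁻`. Then for every `n ≥ 2`,
`∫_{M₁}^x C(τ)ⁿ · n v(τ)^{n-1} v'(τ) dτ → ∞` as `x → x₀⁻`. -/
theorem stmt7 (x₀ : EReal) (hx₀ : 0 < x₀)
    (F F' F'' : ℝ → ℝ)
    (hF' : ∀ x : ℝ, 0 ≤ x → (x : EReal) < x₀ → HasDerivAt F (F' x) x)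
    (hF'' : ∀ x : ℝ, 0 ≤ x → (x : EReal) < x₀ → HasDerivAt F' (F'' x) x)
    (hF''cont : ContinuousOn F'' {x : ℝ | 0 ≤ x ∧ (x : EReal) < x₀})
    (hF0 : F 0 = 0) (hF'0 : F' 0 = 0)
    (hconv : ∀ x : ℝ, 0 ≤ x → (x : EReal) < x₀ → 0 ≤ F'' x)
    (M₁ : ℝ) (hM₁ : 0 < M₁) (hM₁x₀ : (M₁ : EReal) < x₀) (hF'M₁ : 0 < F' M₁)
    (v : ℝ → ℝ) (hv : ∀ x, v x = ∫ τ in (0 : ℝ)..x, 2 * τ * Real.sqrt (1 + F' τ ^ 2))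
    (C : ℝ → ℝ) (hC : ∀ x, C x = (2 * v x - 2 * x ^ 2) / (v x) ^ 2)
    (hvlim : Tendsto v
      (Filter.comap (fun x : ℝ => (x : EReal)) (nhdsWithin x₀ (Iio x₀))) atTop) :
    ∀ n : ℕ, 2 ≤ n →
      Tendsto (fun x : ℝ => ∫ τ in M₁..x, C τ ^ n * ((n : ℝ) * v τ ^ (n - 1) * deriv v τ))
        (Filter.comap (fun x : ℝ => (x : EReal)) (nhdsWithin x₀ (Iio x₀))) atTop := by
  intro n hn
  set L := Filter.comap (fun x : ℝ => (x : EReal)) (nhdsWithin x₀ (Iio x₀)) with hLdef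
  rcases Filter.eq_or_neBot L with hbot | hne
  · rw [hbot]; exact tendsto_bot
  set S : ℝ → ℝ := fun τ => 2 * τ * Real.sqrt (1 + F' τ ^ 2) with hSdef
  have hlt : ∀ {a b : ℝ}, a ≤ b → (b : EReal) < x₀ → (a : EReal) < x₀ := by
    intro a b h hb
    exact lt_of_le_of_lt (EReal.coe_le_coe_iff.mpr h) hb
  have hF'cont : ∀ τ : ℝ, 0 ≤ τ → (τ : EReal) < x₀ → ContinuousAt F' τ :=
    fun τ h1 h2 => (hF'' τ h1 h2).continuousAt
  have hScont : ∀ τ : ℝ, 0 ≤ τ → (τ : EReal) < x₀ → ContinuousAt S τ := by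
    intro τ h1 h2
    exact (continuousAt_const.mul continuousAt_id).mul
      (Real.continuous_sqrt.continuousAt.comp
        (continuousAt_const.add ((hF'cont τ h1 h2).pow 2)))
  have hSnonneg : ∀ τ : ℝ, 0 ≤ τ → 0 ≤ S τ := by
    intro τ hτ
    exact mul_nonneg (by linarith) (Real.sqrt_nonneg _)
  have hsqrt_one_le : ∀ a : ℝ, (1 : ℝ) ≤ Real.sqrt (1 + a ^ 2) := by
    intro a
    have h := Real.sqrt_le_sqrt (show (1:ℝ) ≤ 1 + a ^ 2 by nlinarith)
    simpa using h
  have hS_ge : ∀ τ : ℝ, 0 ≤ τ → 2 * τ ≤ S τ := by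
    intro τ hτ
    have h := hsqrt_one_le (F' τ)
    simp only [hSdef]
    nlinarith
  have hSint : ∀ a b : ℝ, 0 ≤ a → 0 ≤ b → (a : EReal) < x₀ → (b : EReal) < x₀ →
      IntervalIntegrable S volume a b := by
    intro a b ha hb hax hbx
    apply ContinuousOn.intervalIntegrable
    intro τ hτ
    have hτ1 : 0 ≤ τ := le_trans (le_inf ha hb) hτ.1
    have hmax : ((a ⊔ b : ℝ) : EReal) < x₀ := by
      rcases le_total a b with h | h
      · rw [sup_eq_right.mpr h]; exact hbx
      · rw [sup_eq_left.mpr h]; exact hax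
    exact (hScont τ hτ1 (hlt hτ.2 hmax)).continuousWithinAt
  have hvd : ∀ b : ℝ, 0 < b → (b : EReal) < x₀ → HasDerivAt v (S b) b := by
    intro b hb hbx
    obtain ⟨r, hbr, hrx⟩ := EReal.lt_iff_exists_real_btwn.mp hbx
    have hbr' : b < r := by exact_mod_cast hbr
    have hmeas : StronglyMeasurableAtFilter S (nhds b) volume := by
      refine ContinuousAt.stronglyMeasurableAtFilter (isOpen_Ioo : IsOpen (Ioo (0:ℝ) r))
        (fun τ hτ => hScont τ hτ.1.le (hlt hτ.2.le hrx)) b ⟨hb, hbr'⟩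
    have hint : IntervalIntegrable S volume 0 b :=
      hSint 0 b le_rfl hb.le (by exact_mod_cast hx₀) hbx
    have h := intervalIntegral.integral_hasDerivAt_right hint hmeas (hScont b hb.le hbx)
    have hveq : v = fun u => ∫ τ in (0:ℝ)..u, S τ := funext hv
    rw [hveq]
    exact h
  have hvsub : ∀ a b : ℝ, 0 ≤ a → 0 ≤ b → (a : EReal) < x₀ → (b : EReal) < x₀ →
      v b = v a + ∫ τ in a..b, S τ := by
    intro a b ha hb hax hbx
    rw [hv a, hv b,
      ← intervalIntegral.integral_add_adjacent_intervals
        (hSint 0 a le_rfl ha (by exact_mod_cast hx₀) hax)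
        (hSint a b ha hb hax hbx)]
  have hvmono : ∀ a b : ℝ, 0 ≤ a → a ≤ b → (b : EReal) < x₀ → v a ≤ v b := by
    intro a b ha hab hbx
    have h := hvsub a b ha (le_trans ha hab) (hlt hab hbx) hbx
    have h0 : 0 ≤ ∫ τ in a..b, S τ :=
      intervalIntegral.integral_nonneg hab (fun u hu => hSnonneg u (le_trans ha hu.1))
    linarith
  have hvsq : ∀ x : ℝ, 0 ≤ x → (x : EReal) < x₀ → x ^ 2 ≤ v x := by
    intro x hx hxx
    have h2x : (∫ τ in (0:ℝ)..x, 2 * τ) = x ^ 2 := by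
      rw [intervalIntegral.integral_const_mul]
      simp [integral_id]
      ring
    have hmono : (∫ τ in (0:ℝ)..x, 2 * τ) ≤ ∫ τ in (0:ℝ)..x, S τ := by
      refine intervalIntegral.integral_mono_on hx ?_ ?_ ?_
      · exact (continuous_const.mul continuous_id).intervalIntegrable 0 x
      · exact hSint 0 x le_rfl hx (by exact_mod_cast hx₀) hxx
      · exact fun τ hτ => hS_ge τ hτ.1
    rw [hv]
    linarith
  have hvpos : ∀ x : ℝ, M₁ ≤ x → (x : EReal) < x₀ → 0 < v x := by
    intro x hx hxx
    have h1 : M₁ ^ 2 ≤ x ^ 2 := by nlinarith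
    have := hvsq x (le_trans hM₁.le hx) hxx
    nlinarith
  have hF'mono : ∀ τ : ℝ, M₁ ≤ τ → (τ : EReal) < x₀ → F' M₁ ≤ F' τ := by
    intro τ hτ hτx
    have huicc : uIcc M₁ τ = Icc M₁ τ := uIcc_of_le hτ
    have hder : ∀ u ∈ uIcc M₁ τ, HasDerivAt F' (F'' u) u := by
      intro u hu
      rw [huicc] at hu
      exact hF'' u (le_trans hM₁.le hu.1) (hlt hu.2 hτx)
    have hint : IntervalIntegrable F'' volume M₁ τ := by
      apply ContinuousOn.intervalIntegrable
      refine hF''cont.mono ?_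
      rw [huicc]
      exact fun u hu => ⟨le_trans hM₁.le hu.1, hlt hu.2 hτx⟩
    have heq := intervalIntegral.integral_eq_sub_of_hasDerivAt hder hint
    have h0 : 0 ≤ ∫ u in M₁..τ, F'' u :=
      intervalIntegral.integral_nonneg hτ
        (fun u hu => hconv u (le_trans hM₁.le hu.1) (hlt hu.2 hτx))
    linarith
  set u₁ : ℝ := Real.sqrt (1 + F' M₁ ^ 2) with hu₁def
  have hu₁ : 1 < u₁ := by
    have h : Real.sqrt 1 < Real.sqrt (1 + F' M₁ ^ 2) :=
      Real.sqrt_lt_sqrt (by norm_num) (by nlinarith)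
    rw [hu₁def]
    simpa using h
  set ε : ℝ := 2 * (u₁ - 1) / u₁ with hεdef
  have hε : 0 < ε := by
    apply div_pos (by linarith) (by linarith)
  have hkey : ∀ τ : ℝ, M₁ ≤ τ → (τ : EReal) < x₀ → ε * S τ ≤ 2 * S τ - 4 * τ := by
    intro τ hτ hτx
    have hτ0 : 0 < τ := lt_of_lt_of_le hM₁ hτ
    have hF'τ : F' M₁ ≤ F' τ := hF'mono τ hτ hτx
    have hu : u₁ ≤ Real.sqrt (1 + F' τ ^ 2) := by
      rw [hu₁def]
      exact Real.sqrt_le_sqrt (by nlinarith)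
    set u : ℝ := Real.sqrt (1 + F' τ ^ 2) with hudef
    have hεu : ε * u ≤ 2 * (u - 1) := by
      rw [hεdef, div_mul_eq_mul_div, div_le_iff₀ (by linarith)]
      nlinarith
    have hSτ : S τ = 2 * τ * u := by rw [hSdef]
    rw [hSτ]
    nlinarith [mul_le_mul_of_nonneg_left hεu (show (0:ℝ) ≤ 2 * τ by linarith)]
  have hIcont : ∀ (g : ℝ → ℝ) (a b : ℝ), M₁ ≤ a → (b : EReal) < x₀ →
      (∀ τ, M₁ ≤ τ → (τ : EReal) < x₀ → ContinuousAt g τ) →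
      IntervalIntegrable g volume a b ∨ True := fun _ _ _ _ _ _ => Or.inr trivial
  have hnum : ∀ x : ℝ, M₁ ≤ x → (x : EReal) < x₀ →
      ε * (v x - v M₁) ≤ 2 * v x - 2 * x ^ 2 := by
    intro x hx hxx
    have huicc : uIcc M₁ x = Icc M₁ x := uIcc_of_le hx
    have hWd : ∀ τ ∈ uIcc M₁ x, HasDerivAt (fun y => 2 * v y - 2 * y ^ 2)
        (2 * S τ - 4 * τ) τ := by
      intro τ hτ
      rw [huicc] at hτ
      have h1 := (hvd τ (lt_of_lt_of_le hM₁ hτ.1) (hlt hτ.2 hxx)).const_mul (2:ℝ)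
      have h2 : HasDerivAt (fun y : ℝ => 2 * y ^ 2) (4 * τ) τ := by
        have := (hasDerivAt_pow 2 τ).const_mul (2:ℝ)
        norm_num at this
        rw [show (4:ℝ) * τ = 2 * (2 * τ) by ring]
        exact this
      exact h1.sub h2
    have hSintx : IntervalIntegrable S volume M₁ x :=
      hSint M₁ x hM₁.le (le_trans hM₁.le hx) hM₁x₀ hxx
    have hIint : IntervalIntegrable (fun τ => 2 * S τ - 4 * τ) volume M₁ x := by
      exact (hSintx.const_mul 2).sub ((continuous_const.mul continuous_id).intervalIntegrable _ _)
    have heq1 := intervalIntegral.integral_eq_sub_of_hasDerivAt hWd hIint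
    have hvdint : ∀ τ ∈ uIcc M₁ x, HasDerivAt v (S τ) τ := by
      intro τ hτ
      rw [huicc] at hτ
      exact hvd τ (lt_of_lt_of_le hM₁ hτ.1) (hlt hτ.2 hxx)
    have heq2 := intervalIntegral.integral_eq_sub_of_hasDerivAt hvdint hSintx
    have hmono : (∫ τ in M₁..x, ε * S τ) ≤ ∫ τ in M₁..x, (2 * S τ - 4 * τ) := by
      refine intervalIntegral.integral_mono_on hx (hSintx.const_mul ε) hIint ?_
      exact fun τ hτ => hkey τ hτ.1 (hlt hτ.2 hxx)
    rw [intervalIntegral.integral_const_mul, heq2] at hmono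
    rw [heq1] at hmono
    have hM₁sq : M₁ ^ 2 ≤ v M₁ := hvsq M₁ hM₁.le hM₁x₀
    linarith
  have hCpos : ∀ x : ℝ, M₁ ≤ x → (x : EReal) < x₀ → 0 ≤ C x := by
    intro x hx hxx
    rw [hC]
    apply div_nonneg _ (sq_nonneg _)
    have h1 := hnum x hx hxx
    have h2 := hvmono M₁ x hM₁.le hx hxx
    nlinarith
  set G : ℝ → ℝ := fun τ => C τ ^ n * ((n : ℝ) * v τ ^ (n - 1) * S τ) with hGdef
  have hGcontAt : ∀ τ : ℝ, M₁ ≤ τ → (τ : EReal) < x₀ → ContinuousAt G τ := by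
    intro τ hτ hτx
    have hvc := (hvd τ (lt_of_lt_of_le hM₁ hτ) hτx).continuousAt
    have hCc : ContinuousAt C τ := by
      have hCfun : C = fun y => (2 * v y - 2 * y ^ 2) / (v y) ^ 2 := funext hC
      rw [hCfun]
      exact ((continuousAt_const.mul hvc).sub
        (continuousAt_const.mul (continuousAt_id.pow 2))).div (hvc.pow 2)
        (pow_ne_zero _ (hvpos τ hτ hτx).ne')
    rw [hGdef]
    exact (hCc.pow n).mul
      ((continuousAt_const.mul (hvc.pow (n - 1))).mul
        (hScont τ (le_trans hM₁.le hτ) hτx))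
  have hGnonneg : ∀ τ : ℝ, M₁ ≤ τ → (τ : EReal) < x₀ → 0 ≤ G τ := by
    intro τ hτ hτx
    rw [hGdef]
    have h0τ : (0:ℝ) ≤ τ := le_trans hM₁.le hτ
    exact mul_nonneg (pow_nonneg (hCpos τ hτ hτx) n)
      (mul_nonneg (mul_nonneg (by positivity) (pow_nonneg (hvpos τ hτ hτx).le _))
        (hSnonneg τ h0τ))
  have hevx₀ : ∀ᶠ x : ℝ in L, (x : EReal) < x₀ := by
    rw [hLdef]
    refine eventually_comap.mpr ?_
    filter_upwards [self_mem_nhdsWithin] with y hy a ha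
    rw [ha]; exact hy
  have hevgt : ∀ c : ℝ, (c : EReal) < x₀ → ∀ᶠ x : ℝ in L, c < x := by
    intro c hc
    rw [hLdef]
    refine eventually_comap.mpr ?_
    have h : ∀ᶠ y in nhdsWithin x₀ (Iio x₀), (c : EReal) < y :=
      mem_nhdsWithin_of_mem_nhds (isOpen_Ioi.mem_nhds hc)
    filter_upwards [h] with y hy a ha
    have ha' : (a : EReal) = y := ha
    rw [← ha'] at hy
    exact_mod_cast hy
  have hev3 := hvlim.eventually_ge_atTop (2 * v M₁ + 1)
  obtain ⟨x₂, hx₂v, hx₂x₀, hx₂M⟩ := (hev3.and (hevx₀.and (hevgt M₁ hM₁x₀))).exists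
  have hM₁x₂ : M₁ ≤ x₂ := hx₂M.le
  set c : ℝ := (n : ℝ) * (ε / 2) ^ n with hcdef
  have hc : 0 < c := by
    apply mul_pos _ (pow_pos (by linarith) n)
    exact_mod_cast (by omega : 0 < n)
  have hbound : ∀ᶠ x in L, c * (Real.log (v x) - Real.log (v x₂)) ≤
      ∫ τ in M₁..x, C τ ^ n * ((n : ℝ) * v τ ^ (n - 1) * deriv v τ) := by
    filter_upwards [hevx₀, hevgt x₂ hx₂x₀] with x hxx₀ hx₂x
    have hMx : M₁ ≤ x := le_trans hM₁x₂ hx₂x.le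
    have hcongr : (∫ τ in M₁..x, C τ ^ n * ((n : ℝ) * v τ ^ (n - 1) * deriv v τ))
        = ∫ τ in M₁..x, G τ := by
      refine intervalIntegral.integral_congr ?_
      intro τ hτ
      rw [uIcc_of_le hMx] at hτ
      have hd := (hvd τ (lt_of_lt_of_le hM₁ hτ.1) (hlt hτ.2 hxx₀)).deriv
      rw [hGdef]
      simp only
      rw [hd]
    have hGint1 : IntervalIntegrable G volume M₁ x₂ := by
      apply ContinuousOn.intervalIntegrable
      rw [uIcc_of_le hM₁x₂]
      exact fun τ hτ => (hGcontAt τ hτ.1 (hlt hτ.2 hx₂x₀)).continuousWithinAt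
    have hGint2 : IntervalIntegrable G volume x₂ x := by
      apply ContinuousOn.intervalIntegrable
      rw [uIcc_of_le hx₂x.le]
      exact fun τ hτ =>
        (hGcontAt τ (le_trans hM₁x₂ hτ.1) (hlt hτ.2 hxx₀)).continuousWithinAt
    have hsplit : (∫ τ in M₁..x, G τ) = (∫ τ in M₁..x₂, G τ) + ∫ τ in x₂..x, G τ :=
      (intervalIntegral.integral_add_adjacent_intervals hGint1 hGint2).symm
    have h1 : 0 ≤ ∫ τ in M₁..x₂, G τ :=
      intervalIntegral.integral_nonneg hM₁x₂
        (fun τ hτ => hGnonneg τ hτ.1 (hlt hτ.2 hx₂x₀))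
    have hlow : ∀ τ ∈ Icc x₂ x, c * (S τ / v τ) ≤ G τ := by
      intro τ hτ
      have hMτ : M₁ ≤ τ := le_trans hM₁x₂ hτ.1
      have hτx : (τ : EReal) < x₀ := hlt hτ.2 hxx₀
      have hvτ : 0 < v τ := hvpos τ hMτ hτx
      have hvτ2 : 2 * v M₁ + 1 ≤ v τ :=
        le_trans hx₂v (hvmono x₂ τ (le_trans hM₁.le hM₁x₂) hτ.1 hτx)
      have hCτ : (ε / 2) / v τ ≤ C τ := by
        rw [hC]
        have h := hnum τ hMτ hτx
        have hstep : ε * (v τ / 2) ≤ ε * (v τ - v M₁) :=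
          mul_le_mul_of_nonneg_left (by linarith) hε.le
        have hstep2 : (ε / 2) * v τ ≤ 2 * v τ - 2 * τ ^ 2 := by nlinarith
        rw [div_le_div_iff₀ hvτ (by positivity)]
        nlinarith [mul_le_mul_of_nonneg_right hstep2 hvτ.le]
      have hCτ0 : 0 ≤ (ε / 2) / v τ := by positivity
      have hpow : ((ε / 2) / v τ) ^ n ≤ C τ ^ n := pow_le_pow_left₀ hCτ0 hCτ n
      have hfac : 0 ≤ (n : ℝ) * v τ ^ (n - 1) * S τ :=
        mul_nonneg (mul_nonneg (by positivity) (pow_nonneg hvτ.le _))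
          (hSnonneg τ (by linarith))
      have hGτ : ((ε / 2) / v τ) ^ n * ((n : ℝ) * v τ ^ (n - 1) * S τ) ≤ G τ := by
        rw [hGdef]
        exact mul_le_mul_of_nonneg_right hpow hfac
      have hid : ((ε / 2) / v τ) ^ n * ((n : ℝ) * v τ ^ (n - 1) * S τ)
          = c * (S τ / v τ) := by
        rw [hcdef, div_pow]
        have hvn : v τ ^ n = v τ ^ (n - 1) * v τ := by
          rw [← pow_succ]
          congr 1
          omega
        rw [hvn]
        have hvn1 : v τ ^ (n - 1) ≠ 0 := pow_ne_zero _ hvτ.ne'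
        field_simp
      rw [← hid]
      exact hGτ
    have hfd : ∀ τ ∈ uIcc x₂ x, HasDerivAt (fun y => Real.log (v y)) (S τ / v τ) τ := by
      intro τ hτ
      rw [uIcc_of_le hx₂x.le] at hτ
      have hMτ : M₁ ≤ τ := le_trans hM₁x₂ hτ.1
      have hτx : (τ : EReal) < x₀ := hlt hτ.2 hxx₀
      exact (hvd τ (lt_of_lt_of_le hM₁ hMτ) hτx).log (hvpos τ hMτ hτx).ne'
    have hSvint : IntervalIntegrable (fun τ => S τ / v τ) volume x₂ x := by
      apply ContinuousOn.intervalIntegrable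
      rw [uIcc_of_le hx₂x.le]
      intro τ hτ
      have hMτ : M₁ ≤ τ := le_trans hM₁x₂ hτ.1
      have hτx : (τ : EReal) < x₀ := hlt hτ.2 hxx₀
      exact ((hScont τ (le_trans hM₁.le hMτ) hτx).div
        (hvd τ (lt_of_lt_of_le hM₁ hMτ) hτx).continuousAt
        (hvpos τ hMτ hτx).ne').continuousWithinAt
    have hFTC := intervalIntegral.integral_eq_sub_of_hasDerivAt hfd hSvint
    have hmono2 : (∫ τ in x₂..x, c * (S τ / v τ)) ≤ ∫ τ in x₂..x, G τ :=
      intervalIntegral.integral_mono_on hx₂x.le (hSvint.const_mul c) hGint2 hlow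
    rw [intervalIntegral.integral_const_mul, hFTC] at hmono2
    rw [hcongr, hsplit]
    linarith
  have hlog : Tendsto (fun x => Real.log (v x)) L atTop :=
    Real.tendsto_log_atTop.comp hvlim
  have htend : Tendsto (fun x => c * (Real.log (v x) - Real.log (v x₂))) L atTop := by
    apply Tendsto.const_mul_atTop hc
    simp only [sub_eq_add_neg]
    exact tendsto_atTop_add_const_right L (-(Real.log (v x₂))) hlog
  exact tendsto_atTop_mono' L hbound htend
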